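/- Let a > 0 and t₀ ∈ ℝ, and define η(t) := arctan(a·sech(t + t₀)) for t ∈ ℝ. Then for all t ∈ ℝ: sin(η(t)) > 0, sin²(η(t)) − η'(t)² > 0, and sin(η(t))·η''(t) − 2·cos(η(t))·η'(t)² + cos(η(t))·sin²(η(t)) = 0. Consequently, in the setup below, the curve α(t) = cos(η(t))·p + sin(η(t))·γ(t) satisfies the rectifying condition ⟨p, (1/w(t))·T'(t) − α(t)⟩ = 0 for all t, i.e., α is a timelike rectifying curve with respect to p. -/

import Mathlib

open Real

/-- The Minkowski scalar product on `ℝ⁴₁`: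
`⟨x,y⟩ = -x₁y₁ + x₂y₂ + x₃y₃ + x₄y₄`. -/
noncomputable def mdot (x y : Fin 4 → ℝ) : ℝ :=
  -(x 0 * y 0) + x 1 * y 1 + x 2 * y 2 + x 3 * y 3

lemma mdot_comm (x y : Fin 4 → ℝ) : mdot x y = mdot y x := by unfold mdot; ring

lemma mdot_add (p x y : Fin 4 → ℝ) : mdot p (x + y) = mdot p x + mdot p y := by
  simp [mdot, Pi.add_apply]; ring

lemma mdot_sub (p x y : Fin 4 → ℝ) : mdot p (x - y) = mdot p x - mdot p y := by
  simp [mdot, Pi.sub_apply]; ring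

lemma mdot_smul (p : Fin 4 → ℝ) (c : ℝ) (x : Fin 4 → ℝ) : mdot p (c • x) = c * mdot p x := by
  simp [mdot, Pi.smul_apply, smul_eq_mul]; ring

lemma mdot_hasDerivAt (p : Fin 4 → ℝ) {F : ℝ → Fin 4 → ℝ} {F' : Fin 4 → ℝ} {t : ℝ}
    (h : HasDerivAt F F' t) :
    HasDerivAt (fun s => mdot p (F s)) (mdot p F') t := by
  have h0 := hasDerivAt_pi.mp h 0
  have h1 := hasDerivAt_pi.mp h 1
  have h2 := hasDerivAt_pi.mp h 2
  have h3 := hasDerivAt_pi.mp h 3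
  unfold mdot
  exact (((h0.const_mul (p 0)).neg.add (h1.const_mul (p 1))).add (h2.const_mul (p 2))).add
    (h3.const_mul (p 3))

noncomputable def etaF (a t₀ : ℝ) : ℝ → ℝ := fun t => Real.arctan (a * (Real.cosh (t + t₀))⁻¹)

noncomputable def qF (a t₀ : ℝ) : ℝ → ℝ := fun t => Real.cosh (t + t₀) ^ 2 + a ^ 2

noncomputable def d1F (a t₀ : ℝ) : ℝ → ℝ := fun t => -(a * Real.sinh (t + t₀)) / qF a t₀ t

noncomputable def d2F (a t₀ : ℝ) : ℝ → ℝ :=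
  fun t => a * Real.cosh (t + t₀) * (Real.cosh (t + t₀) ^ 2 - 2 - a ^ 2) / (qF a t₀ t) ^ 2

lemma qF_pos (a t₀ t : ℝ) (ha : 0 < a) : 0 < qF a t₀ t := by
  have := Real.cosh_pos (t + t₀); unfold qF; positivity

lemma hasDerivAt_cosh_shift (t₀ t : ℝ) :
    HasDerivAt (fun t => Real.cosh (t + t₀)) (Real.sinh (t + t₀)) t := by
  simpa [Function.comp_def] using (Real.hasDerivAt_cosh (t + t₀)).comp t ((hasDerivAt_id t).add_const t₀)

lemma hasDerivAt_sinh_shift (t₀ t : ℝ) :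
    HasDerivAt (fun t => Real.sinh (t + t₀)) (Real.cosh (t + t₀)) t := by
  simpa [Function.comp_def] using (Real.hasDerivAt_sinh (t + t₀)).comp t ((hasDerivAt_id t).add_const t₀)

lemma hasDerivAt_qF (a t₀ t : ℝ) :
    HasDerivAt (qF a t₀) (2 * Real.cosh (t + t₀) * Real.sinh (t + t₀)) t := by
  have h := ((hasDerivAt_cosh_shift t₀ t).pow 2).add_const (a ^ 2)
  unfold qF
  simpa [qF, mul_comm, mul_assoc, mul_left_comm] using h

lemma hasDerivAt_etaF (a t₀ t : ℝ) : HasDerivAt (etaF a t₀) (d1F a t₀ t) t := by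
  have hc : Real.cosh (t + t₀) ≠ 0 := (Real.cosh_pos (t + t₀)).ne'
  have h3 : HasDerivAt (fun t => (Real.cosh (t + t₀))⁻¹)
      (-Real.sinh (t + t₀) / Real.cosh (t + t₀) ^ 2) t := (hasDerivAt_cosh_shift t₀ t).inv hc
  have h4 := h3.const_mul a
  have h5 := (Real.hasDerivAt_arctan (a * (Real.cosh (t + t₀))⁻¹)).comp t h4
  refine h5.congr_deriv (Eq.symm ?_)
  have hq : qF a t₀ t ≠ 0 := by
    have := Real.cosh_pos (t + t₀); unfold qF; positivity
  unfold d1F qF at *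
  field_simp

lemma hasDerivAt_d1F (a t₀ t : ℝ) (ha : 0 < a) : HasDerivAt (d1F a t₀) (d2F a t₀ t) t := by
  have hq : qF a t₀ t ≠ 0 := (qF_pos a t₀ t ha).ne'
  have hN : HasDerivAt (fun t => -(a * Real.sinh (t + t₀))) (-(a * Real.cosh (t + t₀))) t :=
    ((hasDerivAt_sinh_shift t₀ t).const_mul a).neg
  have h := hN.div (hasDerivAt_qF a t₀ t) hq
  refine h.congr_deriv (Eq.symm ?_)
  have hs := Real.sinh_sq (t + t₀)
  unfold d2F qF at *
  field_simp
  linear_combination (-2) * hs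

lemma sin_etaF (a t₀ t : ℝ) (ha : 0 < a) :
    Real.sin (etaF a t₀ t) = a / Real.sqrt (qF a t₀ t) := by
  have hc : 0 < Real.cosh (t + t₀) := Real.cosh_pos (t + t₀)
  have hq : 0 < qF a t₀ t := qF_pos a t₀ t ha
  have key : Real.sqrt (1 + (a * (Real.cosh (t + t₀))⁻¹) ^ 2)
      = Real.sqrt (qF a t₀ t) / Real.cosh (t + t₀) := by
    rw [show 1 + (a * (Real.cosh (t + t₀))⁻¹) ^ 2 = qF a t₀ t / Real.cosh (t + t₀) ^ 2 by
      unfold qF; field_simp]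
    rw [Real.sqrt_div hq.le, Real.sqrt_sq hc.le]
  rw [etaF, Real.sin_arctan, key]
  have hr : 0 < Real.sqrt (qF a t₀ t) := Real.sqrt_pos.mpr hq
  field_simp

lemma cos_etaF (a t₀ t : ℝ) (ha : 0 < a) :
    Real.cos (etaF a t₀ t) = Real.cosh (t + t₀) / Real.sqrt (qF a t₀ t) := by
  have hc : 0 < Real.cosh (t + t₀) := Real.cosh_pos (t + t₀)
  have hq : 0 < qF a t₀ t := qF_pos a t₀ t ha
  have key : Real.sqrt (1 + (a * (Real.cosh (t + t₀))⁻¹) ^ 2)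
      = Real.sqrt (qF a t₀ t) / Real.cosh (t + t₀) := by
    rw [show 1 + (a * (Real.cosh (t + t₀))⁻¹) ^ 2 = qF a t₀ t / Real.cosh (t + t₀) ^ 2 by
      unfold qF; field_simp]
    rw [Real.sqrt_div hq.le, Real.sqrt_sq hc.le]
  rw [etaF, Real.cos_arctan, key]
  have hr : 0 < Real.sqrt (qF a t₀ t) := Real.sqrt_pos.mpr hq
  field_simp

lemma wsq (a t₀ t : ℝ) (ha : 0 < a) :
    Real.sin (etaF a t₀ t) ^ 2 - (d1F a t₀ t) ^ 2
      = (a * Real.sqrt (1 + a ^ 2) / qF a t₀ t) ^ 2 := by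
  have hq := qF_pos a t₀ t ha
  have hr2 : Real.sqrt (qF a t₀ t) ^ 2 = qF a t₀ t := Real.sq_sqrt hq.le
  have hu2 : Real.sqrt (1 + a ^ 2) ^ 2 = 1 + a ^ 2 := Real.sq_sqrt (by positivity)
  have hs := Real.sinh_sq (t + t₀)
  have hr0 : Real.sqrt (qF a t₀ t) ≠ 0 := by positivity
  rw [sin_etaF a t₀ t ha]
  unfold d1F qF at *
  field_simp
  simp only [hs, hu2, hr2]
  ring

lemma sinsq_sub_pos (a t₀ t : ℝ) (ha : 0 < a) :
    0 < Real.sin (etaF a t₀ t) ^ 2 - (d1F a t₀ t) ^ 2 := by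
  rw [wsq a t₀ t ha]
  have hq := qF_pos a t₀ t ha
  have hu : 0 < Real.sqrt (1 + a ^ 2) := Real.sqrt_pos.mpr (by positivity)
  positivity

lemma ode_etaF (a t₀ t : ℝ) (ha : 0 < a) :
    Real.sin (etaF a t₀ t) * d2F a t₀ t
      - 2 * Real.cos (etaF a t₀ t) * (d1F a t₀ t) ^ 2
      + Real.cos (etaF a t₀ t) * Real.sin (etaF a t₀ t) ^ 2 = 0 := by
  rw [sin_etaF a t₀ t ha, cos_etaF a t₀ t ha]
  have hq := qF_pos a t₀ t ha
  have hr2 : Real.sqrt (qF a t₀ t) ^ 2 = qF a t₀ t := Real.sq_sqrt hq.le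
  have hs := Real.sinh_sq (t + t₀)
  have hr0 : Real.sqrt (qF a t₀ t) ≠ 0 := by positivity
  unfold d1F d2F qF at *
  field_simp
  simp only [hs, hr2]
  ring


/-- For `η(t) = arctan (a sech (t + t₀))` with `a > 0`, `η` satisfies the positivity
and timelikeness conditions and the rectifying ODE; consequently the curve
`α(t) = cos(η t) • p + sin(η t) • γ(t)` is a timelike rectifying curve w.r.t. `p`. -/
theorem arctan_sech_gives_rectifying
    (p : Fin 4 → ℝ) (hp : mdot p p = 1)
    (γ : ℝ → Fin 4 → ℝ) (hγsm : ContDiff ℝ (⊤ : ℕ∞) γ)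
    (hγ1 : ∀ t, mdot (γ t) (γ t) = 1)
    (hγp : ∀ t, mdot (γ t) p = 0)
    (hγ' : ∀ t, mdot (deriv γ t) (deriv γ t) = -1)
    (a t₀ : ℝ) (ha : 0 < a)
    (η : ℝ → ℝ) (hη : ∀ t, η t = Real.arctan (a * (Real.cosh (t + t₀))⁻¹))
    (w : ℝ → ℝ)
    (hw : ∀ t, w t = Real.sqrt (Real.sin (η t) ^ 2 - (deriv η t) ^ 2))
    (α : ℝ → Fin 4 → ℝ)
    (hα : ∀ t, α t = Real.cos (η t) • p + Real.sin (η t) • γ t)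
    (T : ℝ → Fin 4 → ℝ) (hT : ∀ t, T t = (w t)⁻¹ • deriv α t) :
    (∀ t, 0 < Real.sin (η t)) ∧
    (∀ t, (deriv η t) ^ 2 < Real.sin (η t) ^ 2) ∧
    (∀ t, Real.sin (η t) * deriv (deriv η) t
        - 2 * Real.cos (η t) * (deriv η t) ^ 2
        + Real.cos (η t) * Real.sin (η t) ^ 2 = 0) ∧
    (∀ t, mdot p ((w t)⁻¹ • deriv T t - α t) = 0) := by
  have hηe : η = etaF a t₀ := funext hη
  subst hηe
  have hd1 : deriv (etaF a t₀) = d1F a t₀ := funext fun t => (hasDerivAt_etaF a t₀ t).deriv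
  refine ⟨?_, ?_, ?_, ?_⟩
  · intro t
    rw [sin_etaF a t₀ t ha]
    exact div_pos ha (Real.sqrt_pos.mpr (qF_pos a t₀ t ha))
  · intro t
    rw [hd1]
    have := sinsq_sub_pos a t₀ t ha
    linarith
  · intro t
    rw [hd1]
    rw [show deriv (d1F a t₀) t = d2F a t₀ t from (hasDerivAt_d1F a t₀ t ha).deriv]
    exact ode_etaF a t₀ t ha
  -- the rectifying condition
  · -- differentiability of γ
    have hγd : Differentiable ℝ γ := hγsm.differentiable (by simp)
    have hγ1sm : ContDiff ℝ (⊤ : ℕ∞) (deriv γ) := (contDiff_infty_iff_deriv.mp hγsm).2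
    have hγ1d : Differentiable ℝ (deriv γ) := hγ1sm.differentiable (by simp)
    have hpγ : ∀ t, mdot p (γ t) = 0 := fun t => (mdot_comm _ _).trans (hγp t)
    have hpγ1 : ∀ t, mdot p (deriv γ t) = 0 := by
      intro t
      have h := mdot_hasDerivAt p (hγd t).hasDerivAt
      rw [show (fun s => mdot p (γ s)) = (fun _ => (0 : ℝ)) from funext hpγ] at h
      exact h.unique (hasDerivAt_const t 0)
    have hpγ2 : ∀ t, mdot p (deriv (deriv γ) t) = 0 := by
      intro t
      have h := mdot_hasDerivAt p (hγ1d t).hasDerivAt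
      rw [show (fun s => mdot p (deriv γ s)) = (fun _ => (0 : ℝ)) from funext hpγ1] at h
      exact h.unique (hasDerivAt_const t 0)
    -- trig derivatives
    have hS : ∀ t, HasDerivAt (fun t => Real.sin (etaF a t₀ t))
        (Real.cos (etaF a t₀ t) * d1F a t₀ t) t := fun t => by
      simpa [Function.comp_def] using (Real.hasDerivAt_sin (etaF a t₀ t)).comp t (hasDerivAt_etaF a t₀ t)
    have hC : ∀ t, HasDerivAt (fun t => Real.cos (etaF a t₀ t))
        (-Real.sin (etaF a t₀ t) * d1F a t₀ t) t := fun t => by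
      simpa [Function.comp_def] using (Real.hasDerivAt_cos (etaF a t₀ t)).comp t (hasDerivAt_etaF a t₀ t)
    -- the derivative of α
    set A : ℝ → Fin 4 → ℝ := fun t =>
      (-Real.sin (etaF a t₀ t) * d1F a t₀ t) • p
        + (Real.sin (etaF a t₀ t) • deriv γ t
            + (Real.cos (etaF a t₀ t) * d1F a t₀ t) • γ t) with hAdef
    have hαe : α = fun t => Real.cos (etaF a t₀ t) • p + Real.sin (etaF a t₀ t) • γ t :=
      funext hα
    have hαD : ∀ t, HasDerivAt α (A t) t := by
      intro t
      rw [hαe]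
      exact ((hC t).smul_const p).add ((hS t).smul (hγd t).hasDerivAt)
    have hderivα : deriv α = A := funext fun t => (hαD t).deriv
    -- the derivative of A
    have hA2 : ∀ t, HasDerivAt A
        ((-(Real.cos (etaF a t₀ t) * d1F a t₀ t) * d1F a t₀ t
            + -Real.sin (etaF a t₀ t) * d2F a t₀ t) • p
          + ((Real.sin (etaF a t₀ t) • deriv (deriv γ) t
                + (Real.cos (etaF a t₀ t) * d1F a t₀ t) • deriv γ t)
              + ((Real.cos (etaF a t₀ t) * d1F a t₀ t) • deriv γ t
                  + (-Real.sin (etaF a t₀ t) * d1F a t₀ t * d1F a t₀ t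
                      + Real.cos (etaF a t₀ t) * d2F a t₀ t) • γ t))) t := by
      intro t
      exact (((hS t).neg.mul (hasDerivAt_d1F a t₀ t ha)).smul_const p).add
        (((hS t).smul (hγ1d t).hasDerivAt).add
          (((hC t).mul (hasDerivAt_d1F a t₀ t ha)).smul (hγd t).hasDerivAt))
    -- w facts
    have hfpos : ∀ t, 0 < Real.sin (etaF a t₀ t) ^ 2 - d1F a t₀ t ^ 2 :=
      fun t => sinsq_sub_pos a t₀ t ha
    have hweq : w = fun t => Real.sqrt (Real.sin (etaF a t₀ t) ^ 2 - d1F a t₀ t ^ 2) :=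
      funext fun t => by rw [hw t, hd1]
    have hwpos : ∀ t, 0 < w t := fun t => by
      rw [hweq]; exact Real.sqrt_pos.mpr (hfpos t)
    have hw2 : ∀ t, w t ^ 2 = Real.sin (etaF a t₀ t) ^ 2 - d1F a t₀ t ^ 2 := fun t => by
      rw [hweq]; exact Real.sq_sqrt (hfpos t).le
    have hwD : ∀ t, HasDerivAt w
        ((2 * Real.sin (etaF a t₀ t) ^ 1 * (Real.cos (etaF a t₀ t) * d1F a t₀ t)
          - 2 * d1F a t₀ t ^ 1 * d2F a t₀ t) / (2 * w t)) t := by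
      intro t
      rw [hweq]
      have hf : HasDerivAt (fun t => Real.sin (etaF a t₀ t) ^ 2 - d1F a t₀ t ^ 2)
          (2 * Real.sin (etaF a t₀ t) ^ 1 * (Real.cos (etaF a t₀ t) * d1F a t₀ t)
            - 2 * d1F a t₀ t ^ 1 * d2F a t₀ t) t := by
        have := ((hS t).pow 2).sub ((hasDerivAt_d1F a t₀ t ha).pow 2)
        exact this.congr_deriv (by simp)
      exact hf.sqrt (hfpos t).ne'
    have hwinv : ∀ t, HasDerivAt (fun s => (w s)⁻¹)
        (-((2 * Real.sin (etaF a t₀ t) ^ 1 * (Real.cos (etaF a t₀ t) * d1F a t₀ t)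
          - 2 * d1F a t₀ t ^ 1 * d2F a t₀ t) / (2 * w t)) / w t ^ 2) t :=
      fun t => (hwD t).inv (hwpos t).ne'
    -- T
    have hTeq : T = fun t => (w t)⁻¹ • A t := funext fun t => by rw [hT t, hderivα]
    have hTD : ∀ t, HasDerivAt T
        ((w t)⁻¹ • ((-(Real.cos (etaF a t₀ t) * d1F a t₀ t) * d1F a t₀ t
            + -Real.sin (etaF a t₀ t) * d2F a t₀ t) • p
          + ((Real.sin (etaF a t₀ t) • deriv (deriv γ) t
                + (Real.cos (etaF a t₀ t) * d1F a t₀ t) • deriv γ t)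
              + ((Real.cos (etaF a t₀ t) * d1F a t₀ t) • deriv γ t
                  + (-Real.sin (etaF a t₀ t) * d1F a t₀ t * d1F a t₀ t
                      + Real.cos (etaF a t₀ t) * d2F a t₀ t) • γ t)))
          + (-((2 * Real.sin (etaF a t₀ t) ^ 1 * (Real.cos (etaF a t₀ t) * d1F a t₀ t)
              - 2 * d1F a t₀ t ^ 1 * d2F a t₀ t) / (2 * w t)) / w t ^ 2) • A t) t := by
      intro t
      rw [hTeq]
      exact (hwinv t).smul (hA2 t)
    intro t
    rw [show deriv T t = _ from (hTD t).deriv, hα t, hAdef]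
    simp only [mdot_sub, mdot_add, mdot_smul, hp, hpγ, hpγ1, hpγ2, mul_one, mul_zero,
      add_zero, zero_add]
    have hode := ode_etaF a t₀ t ha
    have hw2t := hw2 t
    have hw0 : w t ≠ 0 := (hwpos t).ne'
    field_simp
    ring_nf
    linear_combination (2 * w t * (-(Real.cos (etaF a t₀ t) * d1F a t₀ t ^ 2
        + Real.sin (etaF a t₀ t) * d2F a t₀ t)
      - Real.cos (etaF a t₀ t) * (w t ^ 2 + Real.sin (etaF a t₀ t) ^ 2 - d1F a t₀ t ^ 2))) * hw2t
      + (-2 * w t * Real.sin (etaF a t₀ t) ^ 2) * hode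
      + (Real.cos (etaF a t₀ t) * (2 * w t - 1) * (w t ^ 2 + 2 * d1F a t₀ t ^ 2)) * hw2t
      + (-d1F a t₀ t ^ 2 + 2 * w t * d1F a t₀ t ^ 2 - w t ^ 2 + 2 * w t ^ 3) * hode
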